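/- Let N ~ N(μ, σ²). For every g : ℝ → ℝ with E|g(N)| < ∞ and every locally absolutely continuous h : ℝ → ℝ with E[|h'(N)| · |L_γ g(N)|] < ∞ and such that L_γ g(x) · h(x) · γ(x) → 0 as x → ±∞, one has Cov[g(N), h(N)] = E[(−L_γ g(N)) h'(N)]. -/

import Mathlib

open MeasureTheory ProbabilityTheory Set Filter
open scoped NNReal
open scoped ENNReal
open intervalIntegral Topology

/-- The Gaussian inverse Stein operator
`L_γ g (x) = (1/γ(x)) ∫_{−∞}^x (g(u) − E[g(N)]) γ(u) du`. -/
noncomputable def gaussL (m : ℝ) (v : ℝ≥0) (g : ℝ → ℝ) (x : ℝ) : ℝ :=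
  (∫ u in Iic x, (g u - ∫ y, g y ∂(gaussianReal m v)) ∂(gaussianReal m v)) /
    gaussianPDFReal m v x

/-- `h` is locally absolutely continuous with a.e. derivative `h'`,
expressed through the fundamental theorem of calculus. -/
def HasAEDeriv (h h' : ℝ → ℝ) : Prop :=
  ∀ x y : ℝ, IntervalIntegrable h' MeasureTheory.volume x y ∧
    h y - h x = ∫ t in x..y, h' t

/-- The Gaussian Stein covariance identity:
`Cov[g(N), h(N)] = E[(−L_γ g(N)) h'(N)]` for `N ~ N(m, σ²)`. -/
lemma fubini_parts {a b : ℝ} (ψ h' : ℝ → ℝ)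
    (hψ : IntegrableOn ψ (Ioc a b)) (hh' : IntegrableOn h' (Ioc a b)) :
    ((∫ x in Ioc a b, ψ x * ∫ t in Ioc a x, h' t) +
      ∫ x in Ioc a b, h' x * ∫ t in Ioc a x, ψ t) =
      (∫ x in Ioc a b, ψ x) * ∫ x in Ioc a b, h' x := by
  set ν := volume.restrict (Ioc a b) with hν
  have hF : Integrable (fun p : ℝ × ℝ => ψ p.1 * h' p.2) (ν.prod ν) := hψ.mul_prod hh'
  have hG : Integrable (fun p : ℝ × ℝ => h' p.1 * ψ p.2) (ν.prod ν) := hh'.mul_prod hψ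
  have hS : MeasurableSet {p : ℝ × ℝ | p.2 < p.1} :=
    measurableSet_lt measurable_snd measurable_fst
  have hT : MeasurableSet {p : ℝ × ℝ | p.1 ≤ p.2} :=
    measurableSet_le measurable_fst measurable_snd
  have hT' : MeasurableSet {p : ℝ × ℝ | p.2 ≤ p.1} :=
    measurableSet_le measurable_snd measurable_fst
  have hFS := hF.indicator hS
  have hFT := hF.indicator hT
  have hGT := hG.indicator hT'
  -- term 1
  have t1 : (∫ x in Ioc a b, ψ x * ∫ t in Ioc a x, h' t)
      = ∫ p, ({p : ℝ × ℝ | p.2 < p.1}.indicator (fun p => ψ p.1 * h' p.2)) p ∂(ν.prod ν) := by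
    have key := MeasureTheory.integral_integral (μ := ν) (ν := ν)
      (f := fun x t => ({p : ℝ × ℝ | p.2 < p.1}.indicator (fun p => ψ p.1 * h' p.2)) (x, t)) hFS
    refine Eq.trans ?_ key
    refine setIntegral_congr_fun measurableSet_Ioc fun x hx => ?_
    have e1 : ∀ t : ℝ, ({p : ℝ × ℝ | p.2 < p.1}.indicator (fun p => ψ p.1 * h' p.2)) (x, t)
        = (Iio x).indicator (fun t => ψ x * h' t) t := by
      intro t
      simp only [Set.indicator_apply, mem_setOf_eq, mem_Iio]
    calc ψ x * ∫ t in Ioc a x, h' t = ψ x * ∫ t in Ioo a x, h' t := by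
          rw [integral_Ioc_eq_integral_Ioo]
      _ = ∫ t in Ioo a x, ψ x * h' t := by rw [MeasureTheory.integral_const_mul]
      _ = ∫ t in Ioc a b ∩ Iio x, ψ x * h' t := by
          have hset : Ioc a b ∩ Iio x = Ioo a x := Set.ext fun t =>
            ⟨fun ht => ⟨ht.1.1, ht.2⟩, fun ht => ⟨⟨ht.1, ht.2.le.trans hx.2⟩, ht.2⟩⟩
          rw [hset]
      _ = ∫ t in Ioc a b, (Iio x).indicator (fun t => ψ x * h' t) t := by
          rw [setIntegral_indicator measurableSet_Iio]
      _ = ∫ t, ({p : ℝ × ℝ | p.2 < p.1}.indicator (fun p => ψ p.1 * h' p.2)) (x, t) ∂ν := by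
          simp_rw [e1]; rfl
  -- term 2
  have t2 : (∫ x in Ioc a b, h' x * ∫ t in Ioc a x, ψ t)
      = ∫ p, ({p : ℝ × ℝ | p.1 ≤ p.2}.indicator (fun p => ψ p.1 * h' p.2)) p ∂(ν.prod ν) := by
    have step1 : (∫ x in Ioc a b, h' x * ∫ t in Ioc a x, ψ t)
        = ∫ p, ({p : ℝ × ℝ | p.2 ≤ p.1}.indicator (fun p => h' p.1 * ψ p.2)) p ∂(ν.prod ν) := by
      have key := MeasureTheory.integral_integral (μ := ν) (ν := ν)
        (f := fun x t => ({p : ℝ × ℝ | p.2 ≤ p.1}.indicator (fun p => h' p.1 * ψ p.2)) (x, t)) hGT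
      refine Eq.trans ?_ key
      refine setIntegral_congr_fun measurableSet_Ioc fun x hx => ?_
      have e1 : ∀ t : ℝ, ({p : ℝ × ℝ | p.2 ≤ p.1}.indicator (fun p => h' p.1 * ψ p.2)) (x, t)
          = (Iic x).indicator (fun t => h' x * ψ t) t := by
        intro t
        simp only [Set.indicator_apply, mem_setOf_eq, mem_Iic]
      calc h' x * ∫ t in Ioc a x, ψ t
          = ∫ t in Ioc a x, h' x * ψ t := by rw [MeasureTheory.integral_const_mul]
        _ = ∫ t in Ioc a b ∩ Iic x, h' x * ψ t := by
            have hset : Ioc a b ∩ Iic x = Ioc a x := Set.ext fun t =>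
              ⟨fun ht => ⟨ht.1.1, ht.2⟩, fun ht => ⟨⟨ht.1, ht.2.trans hx.2⟩, ht.2⟩⟩
            rw [hset]
        _ = ∫ t in Ioc a b, (Iic x).indicator (fun t => h' x * ψ t) t := by
            rw [setIntegral_indicator measurableSet_Iic]
        _ = ∫ t, ({p : ℝ × ℝ | p.2 ≤ p.1}.indicator (fun p => h' p.1 * ψ p.2)) (x, t) ∂ν := by
            simp_rw [e1]; rfl
    rw [step1, ← integral_prod_swap]
    congr 1
    funext p
    simp only [Set.indicator_apply, mem_setOf_eq, Prod.fst_swap, Prod.snd_swap]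
    split_ifs
    · ring
    · rfl
  rw [t1, t2, ← integral_add hFS hFT]
  have : (fun p : ℝ × ℝ => ({p : ℝ × ℝ | p.2 < p.1}.indicator (fun p => ψ p.1 * h' p.2)) p
      + ({p : ℝ × ℝ | p.1 ≤ p.2}.indicator (fun p => ψ p.1 * h' p.2)) p)
      = fun p : ℝ × ℝ => ψ p.1 * h' p.2 := by
    funext p
    by_cases hp : p.2 < p.1
    · simp [Set.indicator_apply, hp, not_le.mpr hp]
    · simp [Set.indicator_apply, hp, not_lt.mp hp]
  rw [this, integral_prod_mul]

lemma mul_bdd_integrableOn {a b : ℝ} {f g : ℝ → ℝ} (hg : IntegrableOn g (Ioc a b))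
    (hf : Continuous f) : IntegrableOn (fun x => f x * g x) (Ioc a b) := by
  obtain ⟨C, hC⟩ := isCompact_Icc.exists_bound_of_continuousOn
    (hf.continuousOn : ContinuousOn f (Icc a b))
  exact Integrable.bdd_mul hg (hf.aestronglyMeasurable.restrict)
    ((ae_restrict_iff' measurableSet_Ioc).2 (ae_of_all _ fun x hx =>
      hC x (Ioc_subset_Icc_self hx)))

lemma parts_Ioc {a b : ℝ} (hab : a ≤ b) (ψ h' φ h : ℝ → ℝ)
    (hψint : Integrable ψ (volume : Measure ℝ))
    (hh'loc : ∀ x y : ℝ, IntervalIntegrable h' volume x y)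
    (hφ : ∀ x, φ x = ∫ t in Iic x, ψ t)
    (hh : ∀ x y : ℝ, h y - h x = ∫ t in x..y, h' t) :
    ∫ x in Ioc a b, (ψ x * h x + φ x * h' x) = φ b * h b - φ a * h a := by
  have hφdiff : ∀ x y : ℝ, φ y - φ x = ∫ t in x..y, ψ t := fun x y => by
    rw [hφ x, hφ y, integral_Iic_sub_Iic hψint.integrableOn hψint.integrableOn]
  -- continuity
  have hHc : Continuous fun x => ∫ t in a..x, h' t := continuous_primitive hh'loc a
  have hΨc : Continuous fun x => ∫ t in a..x, ψ t :=
    continuous_primitive (fun _ _ => hψint.intervalIntegrable) a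
  have hhc : Continuous h := by
    have : h = fun x => h a + ∫ t in a..x, h' t := funext fun x => by
      have := hh a x; linarith
    rw [this]; exact continuous_const.add hHc
  have hφc : Continuous φ := by
    have : φ = fun x => φ a + ∫ t in a..x, ψ t := funext fun x => by
      have := hφdiff a x; linarith
    rw [this]; exact continuous_const.add hΨc
  have hhIoc : ∀ x, a ≤ x → h x = h a + ∫ t in Ioc a x, h' t := fun x hx => by
    have := hh a x; rw [intervalIntegral.integral_of_le hx] at this; linarith
  have hφIoc : ∀ x, a ≤ x → φ x = φ a + ∫ t in Ioc a x, ψ t := fun x hx => by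
    have := hφdiff a x; rw [intervalIntegral.integral_of_le hx] at this; linarith
  have hψab : IntegrableOn ψ (Ioc a b) := hψint.integrableOn
  have hh'ab : IntegrableOn h' (Ioc a b) := (hh'loc a b).1
  -- integrability of the pieces
  have Iψh : IntegrableOn (fun x => ψ x * h x) (Ioc a b) :=
    (mul_bdd_integrableOn hψab hhc).congr (ae_of_all _ fun x => mul_comm (h x) (ψ x))
  have Iφh' : IntegrableOn (fun x => φ x * h' x) (Ioc a b) :=
    mul_bdd_integrableOn hh'ab hφc
  have IψH : IntegrableOn (fun x => ψ x * ∫ t in Ioc a x, h' t) (Ioc a b) := by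
    refine IntegrableOn.congr_fun ((mul_bdd_integrableOn hψab hHc).congr
      (ae_of_all _ fun x => mul_comm _ (ψ x))) (fun x hx => ?_) measurableSet_Ioc
    show ψ x * ∫ t in a..x, h' t = ψ x * ∫ t in Ioc a x, h' t
    rw [intervalIntegral.integral_of_le hx.1.le]
  have Ih'Ψ : IntegrableOn (fun x => h' x * ∫ t in Ioc a x, ψ t) (Ioc a b) := by
    refine IntegrableOn.congr_fun ((mul_bdd_integrableOn hh'ab hΨc).congr
      (ae_of_all _ fun x => mul_comm _ (h' x))) (fun x hx => ?_) measurableSet_Ioc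
    show h' x * ∫ t in a..x, ψ t = h' x * ∫ t in Ioc a x, ψ t
    rw [intervalIntegral.integral_of_le hx.1.le]
  -- the two expansions
  have E1 : ∫ x in Ioc a b, ψ x * h x
      = h a * (∫ x in Ioc a b, ψ x) + ∫ x in Ioc a b, ψ x * ∫ t in Ioc a x, h' t := by
    have := setIntegral_congr_fun (μ := volume) (s := Ioc a b) measurableSet_Ioc
      (f := fun x => ψ x * h x)
      (g := fun x => ψ x * h a + ψ x * ∫ t in Ioc a x, h' t)
      (fun x hx => by show ψ x * h x = _; rw [hhIoc x hx.1.le]; ring)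
    have i1 : IntegrableOn (fun x => ψ x * h a) (Ioc a b) := hψab.mul_const (h a)
    rw [this, integral_add i1 IψH]
    congr 1
    simp_rw [mul_comm (ψ _) (h a), ← smul_eq_mul (α := ℝ), MeasureTheory.integral_smul]
  have E2 : ∫ x in Ioc a b, φ x * h' x
      = φ a * (∫ x in Ioc a b, h' x) + ∫ x in Ioc a b, h' x * ∫ t in Ioc a x, ψ t := by
    have := setIntegral_congr_fun (μ := volume) (s := Ioc a b) measurableSet_Ioc
      (f := fun x => φ x * h' x)
      (g := fun x => φ a * h' x + h' x * ∫ t in Ioc a x, ψ t)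
      (fun x hx => by show φ x * h' x = _; rw [hφIoc x hx.1.le]; ring)
    have i2 : IntegrableOn (fun x => φ a * h' x) (Ioc a b) := hh'ab.const_mul (φ a)
    rw [this, integral_add i2 Ih'Ψ]
    congr 1
    simp_rw [← smul_eq_mul (α := ℝ), MeasureTheory.integral_smul]
  have hA : ∫ x in Ioc a b, ψ x = φ b - φ a := by
    rw [hφdiff a b, intervalIntegral.integral_of_le hab]
  have hB : ∫ x in Ioc a b, h' x = h b - h a := by
    rw [hh a b, intervalIntegral.integral_of_le hab]
  have hT := fubini_parts ψ h' hψab hh'ab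
  rw [hA, hB] at hT
  rw [integral_add Iψh Iφh', E1, E2, hA, hB]
  linear_combination hT

theorem gaussian_stein_covariance_identity (m σ : ℝ) (hσ : 0 < σ)
    (g h h' : ℝ → ℝ)
    (hgmeas : Measurable g) (hhmeas : Measurable h) (hh'meas : Measurable h')
    (hgint : Integrable g (gaussianReal m ((σ ^ 2).toNNReal)))
    (hhint : Integrable h (gaussianReal m ((σ ^ 2).toNNReal)))
    (hghint : Integrable (fun x => g x * h x) (gaussianReal m ((σ ^ 2).toNNReal)))
    (hAC : HasAEDeriv h h')
    (hmix : Integrable (fun x => |h' x| * |gaussL m ((σ ^ 2).toNNReal) g x|)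
      (gaussianReal m ((σ ^ 2).toNNReal)))
    (hlimtop : Tendsto
      (fun x => gaussL m ((σ ^ 2).toNNReal) g x * h x * gaussianPDFReal m ((σ ^ 2).toNNReal) x)
      atTop (nhds 0))
    (hlimbot : Tendsto
      (fun x => gaussL m ((σ ^ 2).toNNReal) g x * h x * gaussianPDFReal m ((σ ^ 2).toNNReal) x)
      atBot (nhds 0)) :
    (∫ x, g x * h x ∂(gaussianReal m ((σ ^ 2).toNNReal))) -
        (∫ x, g x ∂(gaussianReal m ((σ ^ 2).toNNReal))) *
          (∫ x, h x ∂(gaussianReal m ((σ ^ 2).toNNReal))) =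
      ∫ x, (-(gaussL m ((σ ^ 2).toNNReal) g x)) * h' x
        ∂(gaussianReal m ((σ ^ 2).toNNReal)) := by
  set v : ℝ≥0 := (σ ^ 2).toNNReal with hvdef
  have hv : v ≠ 0 := (Real.toNNReal_pos.mpr (by positivity)).ne'
  set γ : ℝ → ℝ := gaussianPDFReal m v with hγdef
  have hγpos : ∀ x, 0 < γ x := fun x => gaussianPDFReal_pos m v x hv
  have hγm : Measurable γ := measurable_gaussianPDFReal m v
  have hμ : gaussianReal m v = volume.withDensity fun x => ((γ x).toNNReal : ℝ≥0∞) := by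
    rw [gaussianReal_of_var_ne_zero m hv]; rfl
  have hconv : ∀ (μ0 : Measure ℝ) (f : ℝ → ℝ),
      ∫ x, f x ∂(μ0.withDensity fun x => ((γ x).toNNReal : ℝ≥0∞)) = ∫ x, f x * γ x ∂μ0 := by
    intro μ0 f
    rw [integral_withDensity_eq_integral_smul hγm.real_toNNReal]
    refine integral_congr_ae (ae_of_all _ fun x => ?_)
    simp [NNReal.smul_def, Real.coe_toNNReal _ (hγpos x).le, mul_comm]
  have hIconv : ∀ f : ℝ → ℝ, Integrable f (gaussianReal m v) ↔
      Integrable (fun x => f x * γ x) volume := by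
    intro f
    rw [hμ, integrable_withDensity_iff hγm.real_toNNReal.coe_nnreal_ennreal
      (ae_of_all _ fun x => ENNReal.coe_lt_top)]
    exact integrable_congr (ae_of_all _ fun x => by
      simp [Real.coe_toNNReal _ (hγpos x).le])
  set gbar : ℝ := ∫ x, g x ∂(gaussianReal m v) with hgbardef
  set ψ : ℝ → ℝ := fun x => (g x - gbar) * γ x with hψdef
  set φ : ℝ → ℝ := fun x => ∫ t in Iic x, ψ t with hφdef
  have hψint : Integrable ψ volume := (hIconv fun x => g x - gbar).1 (hgint.sub (integrable_const gbar))
  have hgaussL : ∀ x, gaussL m v g x = φ x / γ x := by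
    intro x
    rw [gaussL]
    congr 1
    rw [show (∫ y, g y ∂(gaussianReal m v)) = gbar from hgbardef.symm, hμ,
      restrict_withDensity measurableSet_Iic, hconv]
  have hφγ : ∀ x, φ x = gaussL m v g x * γ x := fun x => by
    rw [hgaussL x]
    exact (div_mul_cancel₀ (φ x) (hγpos x).ne').symm
  have hφcont : Continuous φ := by
    have hrep : φ = fun x => φ 0 + ∫ t in (0:ℝ)..x, ψ t := funext fun x => by
      have hd : φ x - φ 0 = ∫ t in (0:ℝ)..x, ψ t :=
        integral_Iic_sub_Iic hψint.integrableOn hψint.integrableOn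
      linarith
    rw [hrep]
    exact continuous_const.add
      (continuous_primitive (fun _ _ => hψint.intervalIntegrable) 0)
  have Iψh : Integrable (fun x => ψ x * h x) volume := by
    have h1 : Integrable (fun x => (g x - gbar) * h x) (gaussianReal m v) :=
      (hghint.sub (hhint.const_mul gbar)).congr (ae_of_all _ fun x => by simp only [Pi.sub_apply]; ring)
    exact ((hIconv fun x => (g x - gbar) * h x).1 h1).congr (ae_of_all _ fun x => by
      simp only [hψdef]; ring)
  have Iφh' : Integrable (fun x => φ x * h' x) volume := by
    have h2 : Integrable (fun x => (|h' x| * |gaussL m v g x|) * γ x) volume :=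
      (hIconv _).1 hmix
    have hmeas : AEStronglyMeasurable (fun x => φ x * h' x) volume :=
      hφcont.aestronglyMeasurable.mul hh'meas.aestronglyMeasurable
    rw [← integrable_norm_iff hmeas]
    refine h2.congr (ae_of_all _ fun x => ?_)
    show |h' x| * |gaussL m v g x| * γ x = ‖φ x * h' x‖
    rw [Real.norm_eq_abs, abs_mul, hφγ x, abs_mul, abs_of_pos (hγpos x)]
    ring
  have hbd : ∀ x, gaussL m v g x * h x * γ x = φ x * h x := fun x => by
    rw [hφγ x]; ring
  have hzero : (∫ x, ψ x * h x) + (∫ x, φ x * h' x) = 0 := by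
    have htot : Integrable (fun x => ψ x * h x + φ x * h' x) volume := Iψh.add Iφh'
    have t1 : Tendsto (fun n : ℕ => ∫ x in (-(n:ℝ))..(n:ℝ), (ψ x * h x + φ x * h' x)) atTop
        (𝓝 (∫ x, (ψ x * h x + φ x * h' x))) :=
      intervalIntegral_tendsto_integral htot
        (tendsto_neg_atBot_iff.mpr tendsto_natCast_atTop_atTop) tendsto_natCast_atTop_atTop
    have heq : ∀ n : ℕ, (∫ x in (-(n:ℝ))..(n:ℝ), (ψ x * h x + φ x * h' x))
        = φ (n:ℝ) * h (n:ℝ) - φ (-(n:ℝ)) * h (-(n:ℝ)) := fun n => by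
      have hn : -(n:ℝ) ≤ (n:ℝ) := by
        have := Nat.cast_nonneg (α := ℝ) n; linarith
      rw [intervalIntegral.integral_of_le hn]
      exact parts_Ioc hn ψ h' φ h hψint (fun x y => (hAC x y).1) (fun x => rfl)
        (fun x y => (hAC x y).2)
    have t2 : Tendsto (fun n : ℕ => φ (n:ℝ) * h (n:ℝ) - φ (-(n:ℝ)) * h (-(n:ℝ))) atTop
        (𝓝 (0 - 0)) := by
      refine Tendsto.sub ?_ ?_
      · exact (hlimtop.comp tendsto_natCast_atTop_atTop).congr fun n => hbd _
      · exact (hlimbot.comp (tendsto_neg_atBot_iff.mpr tendsto_natCast_atTop_atTop)).congr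
          fun n => hbd _
    have hL : (∫ x, (ψ x * h x + φ x * h' x)) = 0 := by
      have := tendsto_nhds_unique (t1.congr heq) t2
      simpa using this
    rw [integral_add Iψh Iφh'] at hL
    exact hL
  have hR : (∫ x, (-(gaussL m v g x)) * h' x ∂(gaussianReal m v)) = -∫ x, φ x * h' x := by
    rw [hμ, hconv, ← MeasureTheory.integral_neg]
    refine integral_congr_ae (ae_of_all _ fun x => ?_)
    show -gaussL m v g x * h' x * γ x = -(φ x * h' x)
    rw [hφγ x]; ring
  have hL1 : (∫ x, g x * h x ∂(gaussianReal m v)) = ∫ x, (g x * h x) * γ x := by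
    rw [hμ, hconv]
  have hL2 : (∫ x, h x ∂(gaussianReal m v)) = ∫ x, h x * γ x := by rw [hμ, hconv]
  have hL3 : (∫ x, ψ x * h x) = (∫ x, (g x * h x) * γ x) - gbar * ∫ x, h x * γ x := by
    have i1 : Integrable (fun x => (g x * h x) * γ x) volume := (hIconv _).1 hghint
    have i2 : Integrable (fun x => gbar • (h x * γ x)) volume :=
      ((hIconv _).1 hhint).smul gbar
    have hrepr : (fun x => ψ x * h x) = fun x => (g x * h x) * γ x - gbar • (h x * γ x) :=
      funext fun x => by simp only [hψdef, smul_eq_mul]; ring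
    rw [hrepr, MeasureTheory.integral_sub i1 i2, MeasureTheory.integral_smul, smul_eq_mul]
  rw [hL1, hL2, hR]
  linarith [hzero, hL3]
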